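/- If a quantum state |ψ⟩ on qubits indexed by a finite set V admits a family of Pauli measurements {M_k}_{k=1}^N such that (i) for every vertex v and every non-identity Pauli σ, the number of k with (M_k)_v = σ is even, (ii) each M_k satisfies M_k |ψ⟩ = χ_k |ψ⟩ with χ_k ∈ {±1}, and (iii) ∏_k χ_k = −1, then no deterministic local hidden variable assignment h : V × {X,Y,Z} → {±1} reproduces all outcomes χ_k, i.e., there is no h with ∏_{v : (M_k)_v ≠ I} h(v, (M_k)_v) = χ_k for all k. -/
import Mathlib


open scoped Classical

inductive Pauli | I | X | Y | Z
deriving DecidableEq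

instance : Fintype Pauli :=
  ⟨{Pauli.I, Pauli.X, Pauli.Y, Pauli.Z}, by rintro (_|_|_|_) <;> simp⟩

noncomputable def pauliMat : Pauli → Matrix (Fin 2) (Fin 2) ℂ
  | Pauli.I => 1
  | Pauli.X => !![0, 1; 1, 0]
  | Pauli.Y => !![0, -Complex.I; Complex.I, 0]
  | Pauli.Z => !![1, 0; 0, -1]

noncomputable def pauliProd {V : Type} [Fintype V] [DecidableEq V] (σ : V → Pauli) :
    Matrix (V → Fin 2) (V → Fin 2) ℂ :=
  fun f g => ∏ v, pauliMat (σ v) (f v) (g v)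

noncomputable def graphGen {V : Type} [Fintype V] [DecidableEq V] (G : SimpleGraph V) (v : V) :
    Matrix (V → Fin 2) (V → Fin 2) ℂ :=
  pauliProd (fun u => if u = v then Pauli.X else if G.Adj u v then Pauli.Z else Pauli.I)

noncomputable def graphState {V : Type} [Fintype V] [DecidableEq V] (G : SimpleGraph V) :
    (V → Fin 2) → ℂ :=
  fun f => (-1 : ℂ) ^ (∑ e ∈ G.edgeFinset,
      Sym2.lift ⟨fun u v => (f u : ℕ) * (f v : ℕ), fun u v => Nat.mul_comm _ _⟩ e) /
    (Real.sqrt (2 ^ Fintype.card V) : ℂ)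

noncomputable def expVal {V : Type} [Fintype V] [DecidableEq V]
    (ψ : (V → Fin 2) → ℂ) (P : Matrix (V → Fin 2) (V → Fin 2) ℂ) : ℂ :=
  ∑ f, ∑ g, (starRingEnd ℂ) (ψ f) * P f g * ψ g

/-- Abstract GHZ-type all-versus-nothing argument: if the Pauli measurements
`M k` each stabilize `ψ` up to sign `χ k`, occur evenly at each vertex, and
`∏ χ k = -1`, then no deterministic local hidden variable assignment reproduces
all the outcomes `χ k`. -/
theorem stmt6 {V : Type} [Fintype V] [DecidableEq V] (N : ℕ)
    (ψ : (V → Fin 2) → ℂ) (hψ : ψ ≠ 0)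
    (M : Fin N → V → Pauli) (χ : Fin N → ℤ)
    (hχ : ∀ k, χ k = 1 ∨ χ k = -1)
    (heven : ∀ (v : V) (σ : Pauli), σ ≠ Pauli.I →
      Even (Finset.univ.filter (fun k => M k v = σ)).card)
    (heig : ∀ k, (pauliProd (M k)).mulVec ψ = (χ k : ℂ) • ψ)
    (hprod : (∏ k, χ k) = -1) :
    ¬ ∃ h : V → Pauli → ℤ,
      (∀ (v : V) (σ : Pauli), σ ≠ Pauli.I → h v σ = 1 ∨ h v σ = -1) ∧
      ∀ k, (∏ v, if M k v = Pauli.I then 1 else h v (M k v)) = χ k := by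
  rintro ⟨h, hpm, hrep⟩
  have key : (∏ k, χ k) = 1 := by
    calc (∏ k, χ k)
        = ∏ k, ∏ v, (if M k v = Pauli.I then 1 else h v (M k v)) := by
          simp_rw [hrep]
      _ = ∏ v, ∏ k, (if M k v = Pauli.I then 1 else h v (M k v)) := Finset.prod_comm
      _ = 1 := by
          apply Finset.prod_eq_one
          intro v _
          have hsplit : ∀ k : Fin N, (if M k v = Pauli.I then (1:ℤ) else h v (M k v))
              = ∏ σ : Pauli, if M k v = σ then (if σ = Pauli.I then 1 else h v σ) else 1 := by
            intro k
            rw [Finset.prod_eq_single (M k v)]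
            · simp
            · intro σ _ hσ; simp [Ne.symm hσ]
            · simp
          simp_rw [hsplit]
          rw [Finset.prod_comm]
          apply Finset.prod_eq_one
          intro σ _
          by_cases hσ : σ = Pauli.I
          · simp [hσ]
          · have : (∏ k : Fin N, if M k v = σ then (if σ = Pauli.I then (1:ℤ) else h v σ) else 1)
                = (h v σ) ^ (Finset.univ.filter (fun k => M k v = σ)).card := by
              rw [← Finset.prod_const, Finset.prod_filter]
              simp [hσ]
            rw [this]
            rcases hpm v σ hσ with h1 | h1
            · simp [h1]
            · rw [h1]; exact (heven v σ hσ).neg_one_pow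
  rw [hprod] at key
  norm_num at key
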